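/- Let μ be a probability measure on G = (ℤ/2ℤ)³ with a_max = μ({0}) and a_max ≤ 1/4. Suppose there is a decomposition G = X₁ ⊕ X₂ (X₁ ∈ 𝔄₁, X₂ ∈ 𝔄₂, X₁ ∩ X₂ = {0}) such that: (I.1) μ(x + X₁) = 1/4 for every x ∈ X₂; and (I.2a) μ(X₂) = 1/2. Then μ ∈ TEC(G). -/
import Mathlib


open scoped BigOperators

/-- The group `G = (ℤ/2ℤ)³`. -/
abbrev G : Type := ZMod 2 × ZMod 2 × ZMod 2

/-- The character pairing `(x,y) = (-1)^(x₁y₁+x₂y₂+x₃y₃)`. -/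
noncomputable def pairing (x y : G) : ℝ :=
  (-1 : ℝ) ^ (x.1.val * y.1.val + x.2.1.val * y.2.1.val + x.2.2.val * y.2.2.val)

/-- A probability measure on `G`, given by its mass function. -/
def IsProb (p : G → ℝ) : Prop := (∀ x, 0 ≤ p x) ∧ ∑ x : G, p x = 1

/-- The characteristic function `μ̂(y) = Σ_x (x,y) μ({x})`. -/
noncomputable def charFn (p : G → ℝ) (y : G) : ℝ := ∑ x : G, pairing x y * p x

/-- The measure of a set `E ⊆ G`. -/
noncomputable def measOf (p : G → ℝ) (E : Set G) : ℝ := ∑ x : G, E.indicator p x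

/-- `μ` has a trivial equivalence class: every probability measure `ν` with
`|ν̂| = |μ̂|` is a shift `μₓ` of `μ` (central symmetry is the identity on `G`). -/
def TEC (p : G → ℝ) : Prop :=
  ∀ q : G → ℝ, IsProb q → (∀ y : G, |charFn q y| = |charFn p y|) →
    ∃ x : G, ∀ e : G, q e = p (e + x)

/-- `u(E) = max_{x ∈ E} μ({x})`. -/
noncomputable def uOf (p : G → ℝ) (E : Set G) : ℝ := sSup (p '' E)

/-- `v(E) = min_{x ∈ E} μ({x})`. -/
noncomputable def vOf (p : G → ℝ) (E : Set G) : ℝ := sInf (p '' E)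

/-- `μ ∈ U(E)` iff `2 u(E) > μ(E)`. -/
def USet (p : G → ℝ) (E : Set G) : Prop := measOf p E < 2 * uOf p E

/-- `μ ∈ V(E)` iff `1/2 + 2 v(E) < μ(E)`. -/
def VSet (p : G → ℝ) (E : Set G) : Prop := 1/2 + 2 * vOf p E < measOf p E

/-! ### Auxiliary machinery -/

/-- Boolean version of the pairing. -/
def pb (x y : G) : Bool :=
  (x.1.val * y.1.val + x.2.1.val * y.2.1.val + x.2.2.val * y.2.2.val) % 2 == 1

lemma pairing_eq (x y : G) : pairing x y = if pb x y then -1 else 1 := by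
  unfold pairing pb
  rcases Nat.even_or_odd (x.1.val * y.1.val + x.2.1.val * y.2.1.val + x.2.2.val * y.2.2.val)
    with h | h
  · rw [Even.neg_one_pow h]; simp [Nat.even_iff.mp h]
  · rw [Odd.neg_one_pow h]; simp [Nat.odd_iff.mp h]

lemma pb_zero_left : ∀ y : G, pb 0 y = false := by decide
lemma pb_zero_right : ∀ x : G, pb x 0 = false := by decide
lemma pb_comm : ∀ x y : G, pb x y = pb y x := by decide
lemma pb_add_left : ∀ x z y : G, pb (x+z) y = xor (pb x y) (pb z y) := by decide
lemma pb_add_right : ∀ x y z : G, pb x (y+z) = xor (pb x y) (pb x z) := by decide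
lemma Gadd_self : ∀ x : G, x + x = 0 := by decide
lemma Gadd_add_cancel : ∀ u v : G, u + v + v = u := by decide
lemma Gadd_eq_zero : ∀ u v : G, u + v = 0 ↔ u = v := by decide
lemma Gne_add : ∀ x a : G, a ≠ 0 → x ≠ x + a := by decide
set_option synthInstance.maxSize 1000 in
lemma Gsmall : ∀ b c : G, b ≠ 0 → c ≠ 0 → b ≠ c →
    (0:G) ≠ b + c ∧ b ≠ b + c ∧ c ≠ b + c := by decide
lemma exists_pb : ∀ y : G, y ≠ 0 → ∃ w : G, pb w y = true := by decide

set_option synthInstance.maxSize 1000 in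
set_option synthInstance.maxHeartbeats 1000000 in
set_option maxHeartbeats 2000000 in
lemma classify : ∀ a b c : G, b ≠ 0 → c ≠ 0 → b ≠ c → a ≠ 0 → a ≠ b → a ≠ c → a ≠ b+c →
    ∀ x : G, x = 0 ∨ x = a ∨ x = b ∨ x = a+b ∨ x = c ∨ x = a+c ∨ x = b+c ∨ x = a+b+c := by
  decide

set_option synthInstance.maxSize 1000 in
set_option synthInstance.maxHeartbeats 1000000 in
set_option maxHeartbeats 2000000 in
lemma distinct : ∀ a b c : G, b ≠ 0 → c ≠ 0 → b ≠ c → a ≠ 0 → a ≠ b → a ≠ c → a ≠ b+c →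
  (0:G) ≠ a ∧ (0:G) ≠ b ∧ (0:G) ≠ a+b ∧ (0:G) ≠ c ∧ (0:G) ≠ a+c ∧ (0:G) ≠ b+c ∧
  (0:G) ≠ a+b+c ∧
  a ≠ a+b ∧ a ≠ a+c ∧ a ≠ a+b+c ∧
  b ≠ a+b ∧ b ≠ a+c ∧ b ≠ b+c ∧ b ≠ a+b+c ∧
  a+b ≠ c ∧ a+b ≠ a+c ∧ a+b ≠ b+c ∧ a+b ≠ a+b+c ∧
  c ≠ a+c ∧ c ≠ b+c ∧ c ≠ a+b+c ∧
  a+c ≠ b+c ∧ a+c ≠ a+b+c ∧ b+c ≠ a+b+c := by decide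

set_option synthInstance.maxSize 1000 in
set_option synthInstance.maxHeartbeats 1000000 in
set_option maxHeartbeats 2000000 in
lemma notmem : ∀ a b c : G, b ≠ 0 → c ≠ 0 → b ≠ c → a ≠ 0 → a ≠ b → a ≠ c → a ≠ b+c →
  (a ≠ 0 ∧ a ≠ b ∧ a ≠ c ∧ a ≠ b+c) ∧
  (a+b ≠ 0 ∧ a+b ≠ b ∧ a+b ≠ c ∧ a+b ≠ b+c) ∧
  (a+c ≠ 0 ∧ a+c ≠ b ∧ a+c ≠ c ∧ a+c ≠ b+c) ∧
  (a+b+c ≠ 0 ∧ a+b+c ≠ b ∧ a+b+c ≠ c ∧ a+b+c ≠ b+c) := by decide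

set_option synthInstance.maxSize 1000 in
set_option synthInstance.maxHeartbeats 1000000 in
set_option maxHeartbeats 2000000 in
lemma dual_a : ∀ a b c : G, b ≠ 0 → c ≠ 0 → b ≠ c → a ≠ 0 → a ≠ b → a ≠ c → a ≠ b+c →
    ∃ w : G, pb a w = true ∧ pb b w = false ∧ pb c w = false := by decide

set_option synthInstance.maxSize 1000 in
set_option synthInstance.maxHeartbeats 1000000 in
set_option maxHeartbeats 2000000 in
lemma dual_b : ∀ a b c : G, b ≠ 0 → c ≠ 0 → b ≠ c → a ≠ 0 → a ≠ b → a ≠ c → a ≠ b+c →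
    ∃ w : G, pb a w = false ∧ pb b w = true ∧ pb c w = false := by decide

set_option synthInstance.maxSize 1000 in
set_option synthInstance.maxHeartbeats 1000000 in
set_option maxHeartbeats 2000000 in
lemma dual_c : ∀ a b c : G, b ≠ 0 → c ≠ 0 → b ≠ c → a ≠ 0 → a ≠ b → a ≠ c → a ≠ b+c →
    ∃ w : G, pb a w = false ∧ pb b w = false ∧ pb c w = true := by decide

lemma pairing_zero_left (y : G) : pairing 0 y = 1 := by rw [pairing_eq, pb_zero_left]; simp
lemma pairing_zero_right (x : G) : pairing x 0 = 1 := by rw [pairing_eq, pb_zero_right]; simp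
lemma pairing_add_left (x z y : G) : pairing (x+z) y = pairing x y * pairing z y := by
  rw [pairing_eq, pairing_eq, pairing_eq, pb_add_left]
  cases pb x y <;> cases pb z y <;> norm_num
lemma pairing_comm (x y : G) : pairing x y = pairing y x := by
  rw [pairing_eq, pairing_eq, pb_comm]

lemma expand (a b c : G) (hb : b ≠ 0) (hc : c ≠ 0) (hbc : b ≠ c) (ha : a ≠ 0)
    (hab : a ≠ b) (hac : a ≠ c) (habc : a ≠ b+c) (f : G → ℝ) :
    ∑ x : G, f x = f 0 + f a + f b + f (a+b) + f c + f (a+c) + f (b+c) + f (a+b+c) := by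
  obtain ⟨d1,d2,d3,d4,d5,d6,d7,d8,d9,d10,d11,d12,d13,d14,d15,d16,d17,d18,d19,d20,d21,d22,d23,d24⟩ :=
    distinct a b c hb hc hbc ha hab hac habc
  have hu : (Finset.univ : Finset G) = {0,a,b,a+b,c,a+c,b+c,a+b+c} := by
    symm
    apply Finset.eq_univ_iff_forall.mpr
    intro x
    simpa using classify a b c hb hc hbc ha hab hac habc x
  rw [hu]
  rw [Finset.sum_insert (by
    simp only [Finset.mem_insert, Finset.mem_singleton, not_or]
    exact ⟨d1,d2,d3,d4,d5,d6,d7⟩)]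
  rw [Finset.sum_insert (by
    simp only [Finset.mem_insert, Finset.mem_singleton, not_or]
    exact ⟨hab,d8,hac,d9,habc,d10⟩)]
  rw [Finset.sum_insert (by
    simp only [Finset.mem_insert, Finset.mem_singleton, not_or]
    exact ⟨d11,hbc,d12,d13,d14⟩)]
  rw [Finset.sum_insert (by
    simp only [Finset.mem_insert, Finset.mem_singleton, not_or]
    exact ⟨d15,d16,d17,d18⟩)]
  rw [Finset.sum_insert (by
    simp only [Finset.mem_insert, Finset.mem_singleton, not_or]
    exact ⟨d19,d20,d21⟩)]
  rw [Finset.sum_insert (by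
    simp only [Finset.mem_insert, Finset.mem_singleton, not_or]
    exact ⟨d22,d23⟩)]
  rw [Finset.sum_insert (by simp only [Finset.mem_singleton]; exact d24)]
  rw [Finset.sum_singleton]
  ring

lemma orth (y : G) (hy : y ≠ 0) : ∑ x : G, pairing x y = 0 := by
  obtain ⟨w, hw⟩ := exists_pb y hy
  have h1 : ∑ x : G, pairing (x + w) y = ∑ x : G, pairing x y :=
    Fintype.sum_equiv (Equiv.addRight w) (fun x => pairing (x+w) y) (fun x => pairing x y)
      (fun x => rfl)
  have h2 : ∀ x : G, pairing (x + w) y = - pairing x y := by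
    intro x
    rw [pairing_add_left, pairing_eq w, hw]
    simp
  simp only [h2] at h1
  rw [Finset.sum_neg_distrib] at h1
  linarith

lemma orth' (z : G) : ∑ y : G, pairing z y = if z = 0 then 8 else 0 := by
  split
  · subst ‹z = 0›
    simp only [pairing_zero_left, Finset.sum_const, Finset.card_univ]
    norm_num [show Fintype.card G = 8 from rfl]
  · rw [show ∑ y : G, pairing z y = ∑ y : G, pairing y z from
      Finset.sum_congr rfl (fun y _ => pairing_comm z y)]
    exact orth z ‹z ≠ 0›

lemma inversion (f : G → ℝ) (e : G) : ∑ y : G, pairing e y * charFn f y = 8 * f e := by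
  unfold charFn
  have h1 : ∀ y : G, pairing e y * ∑ x : G, pairing x y * f x
      = ∑ x : G, pairing (e + x) y * f x := by
    intro y
    rw [Finset.mul_sum]
    exact Finset.sum_congr rfl fun x _ => by rw [pairing_add_left]; ring
  simp only [h1]
  rw [Finset.sum_comm]
  have h2 : ∀ x : G, ∑ y : G, pairing (e+x) y * f x = (if e + x = 0 then 8 else 0) * f x := by
    intro x
    rw [← Finset.sum_mul, orth']
  simp only [h2]
  have he : ∀ x : G, e + x = 0 ↔ x = e := fun x => by rw [Gadd_eq_zero]; exact eq_comm
  simp only [he]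
  simp only [ite_mul, zero_mul]
  rw [Finset.sum_ite_eq' Finset.univ e (fun x => (8:ℝ) * f x)]
  simp

lemma measPair (p : G → ℝ) (u v : G) (h : u ≠ v) : measOf p {u, v} = p u + p v := by
  unfold measOf
  rw [Fintype.sum_eq_add u v h (fun x hx =>
    Set.indicator_of_notMem (by simp [hx.1, hx.2]) p)]
  rw [Set.indicator_of_mem (by simp) p, Set.indicator_of_mem (by simp) p]

lemma solve (a b c a' b' c' : G)
    (haa' : pb a a' = true) (hba' : pb b a' = false) (hca' : pb c a' = false)
    (hab' : pb a b' = false) (hbb' : pb b b' = true) (hcb' : pb c b' = false)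
    (hac' : pb a c' = false) (hbc' : pb b c' = false) (hcc' : pb c c' = true)
    (s1 s2 s3 : Bool) :
    ∃ x : G, pb x (a'+b') = s1 ∧ pb x (a'+c') = s2 ∧ pb x (a'+b'+c') = s3 := by
  cases s1 <;> cases s2 <;> cases s3
  · exact ⟨0, by simp [pb_zero_left]⟩
  · exact ⟨a+b+c, by
      simp [pb_add_left, pb_add_right, haa', hba', hca', hab', hbb', hcb', hac', hbc', hcc']⟩
  · exact ⟨a+b, by
      simp [pb_add_left, pb_add_right, haa', hba', hca', hab', hbb', hcb', hac', hbc', hcc']⟩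
  · exact ⟨c, by
      simp [pb_add_left, pb_add_right, haa', hba', hca', hab', hbb', hcb', hac', hbc', hcc']⟩
  · exact ⟨a+c, by
      simp [pb_add_left, pb_add_right, haa', hba', hca', hab', hbb', hcb', hac', hbc', hcc']⟩
  · exact ⟨b, by
      simp [pb_add_left, pb_add_right, haa', hba', hca', hab', hbb', hcb', hac', hbc', hcc']⟩
  · exact ⟨b+c, by
      simp [pb_add_left, pb_add_right, haa', hba', hca', hab', hbb', hcb', hac', hbc', hcc']⟩
  · exact ⟨a, by
      simp [pb_add_left, pb_add_right, haa', hba', hca', hab', hbb', hcb', hac', hbc', hcc']⟩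

lemma charFn_zero_eq_one (f : G → ℝ) (hf : ∑ x : G, f x = 1) : charFn f 0 = 1 := by
  unfold charFn
  simp only [pairing_zero_right, one_mul]
  exact hf

/-- `a_max = μ({0}) ≤ 1/4`, with a decomposition `G = X₁ ⊕ X₂` satisfying
I.1 and I.2(a), implies `μ ∈ TEC(G)`. -/
theorem stmt0 (p : G → ℝ) (hp : IsProb p)
    (hmax : ∀ x : G, p x ≤ p 0) (hle : p 0 ≤ 1/4)
    (X₁ X₂ : AddSubgroup G) (hX₁ : Nat.card X₁ = 2) (hX₂ : Nat.card X₂ = 4)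
    (hinf : X₁ ⊓ X₂ = ⊥) (hsup : X₁ ⊔ X₂ = ⊤)
    (hI1 : ∀ x ∈ X₂, measOf p ((x + ·) '' (X₁ : Set G)) = 1/4)
    (hI2a : measOf p (X₂ : Set G) = 1/2) :
    TEC p := by
  -- extract generators
  have hcard1 : (X₁ : Set G).ncard = 2 := by
    rw [← Nat.card_coe_set_eq, SetLike.coe_sort_coe]; exact hX₁
  have hcard2 : (X₂ : Set G).ncard = 4 := by
    rw [← Nat.card_coe_set_eq, SetLike.coe_sort_coe]; exact hX₂
  obtain ⟨a, haX1, ha0⟩ : ∃ a ∈ X₁, a ≠ (0:G) := by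
    by_contra h
    push_neg at h
    have hbot : X₁ = ⊥ := by
      ext w; simp only [AddSubgroup.mem_bot]
      exact ⟨fun hw => h w hw, fun hw => by rw [hw]; exact zero_mem X₁⟩
    rw [hbot] at hX₁
    simp [Nat.card_eq_fintype_card] at hX₁
  obtain ⟨b, hbX2, hb0⟩ : ∃ b ∈ X₂, b ≠ (0:G) := by
    by_contra h
    push_neg at h
    have hbot : X₂ = ⊥ := by
      ext w; simp only [AddSubgroup.mem_bot]
      exact ⟨fun hw => h w hw, fun hw => by rw [hw]; exact zero_mem X₂⟩
    rw [hbot] at hX₂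
    simp [Nat.card_eq_fintype_card] at hX₂
  obtain ⟨c, hcX2, hc2⟩ : ∃ c ∈ (X₂ : Set G), c ∉ ({0, b} : Set G) := by
    apply Set.not_subset.mp
    intro hsub
    have h1 := Set.ncard_le_ncard hsub (Set.toFinite _)
    have h2 := Set.ncard_insert_le (0:G) ({b} : Set G)
    rw [Set.ncard_singleton] at h2
    rw [hcard2] at h1
    omega
  simp only [Set.mem_insert_iff, Set.mem_singleton_iff, not_or] at hc2
  obtain ⟨hc0, hcb⟩ := hc2
  have hbc : b ≠ c := fun h => hcb h.symm
  obtain ⟨hs1, hs2, hs3⟩ := Gsmall b c hb0 hc0 hbc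
  -- X₂ as a set
  have hX2set : (X₂ : Set G) = {0, b, c, b+c} := by
    symm
    apply Set.eq_of_subset_of_ncard_le
    · intro x hx
      simp only [Set.mem_insert_iff, Set.mem_singleton_iff] at hx
      rcases hx with rfl | rfl | rfl | rfl
      · exact zero_mem X₂
      · exact hbX2
      · exact hcX2
      · exact add_mem hbX2 hcX2
    · rw [hcard2]
      rw [Set.ncard_insert_of_notMem (by
        simp only [Set.mem_insert_iff, Set.mem_singleton_iff, not_or]
        exact ⟨fun h => hb0 h.symm, fun h => hc0 h.symm, hs1⟩)]
      rw [Set.ncard_insert_of_notMem (by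
        simp only [Set.mem_insert_iff, Set.mem_singleton_iff, not_or]
        exact ⟨hbc, hs2⟩)]
      rw [Set.ncard_pair hs3]
    · exact Set.toFinite _
  -- a is independent from b, c
  have haX2 : a ∉ X₂ := by
    intro h
    have hmem : a ∈ X₁ ⊓ X₂ := ⟨haX1, h⟩
    rw [hinf, AddSubgroup.mem_bot] at hmem
    exact ha0 hmem
  have haset : a ∉ ({0, b, c, b+c} : Set G) := by rw [← hX2set]; exact haX2
  simp only [Set.mem_insert_iff, Set.mem_singleton_iff, not_or] at haset
  obtain ⟨-, hab, hac, habc⟩ := haset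
  -- X₁ as a set
  have hX1set : (X₁ : Set G) = {0, a} := by
    symm
    apply Set.eq_of_subset_of_ncard_le
    · intro x hx
      simp only [Set.mem_insert_iff, Set.mem_singleton_iff] at hx
      rcases hx with rfl | rfl
      · exact zero_mem X₁
      · exact haX1
    · rw [hcard1, Set.ncard_pair (Ne.symm ha0)]
    · exact Set.toFinite _
  -- the coset masses
  have base : ∀ t : G, t ∈ X₂ → p t + p (t + a) = 1/4 := by
    intro t ht
    have h := hI1 t ht
    rw [hX1set, Set.image_insert_eq, Set.image_singleton, add_zero] at h
    rw [measPair p t (t+a) (Gne_add t a ha0)] at h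
    exact h
  have hmemb : b ∈ X₂ := hbX2
  have hmemc : c ∈ X₂ := hcX2
  have hmembc : b + c ∈ X₂ := add_mem hbX2 hcX2
  have hmem0 : (0:G) ∈ X₂ := zero_mem X₂
  have h14 : ∀ x : G, p x + p (x + a) = 1/4 := by
    have shift : ∀ t : G, t ∈ X₂ → p (a + t) + p (a + t + a) = 1/4 := by
      intro t ht
      have e1 : a + t = t + a := add_comm a t
      have e2 : a + t + a = t := by rw [e1, Gadd_add_cancel]
      rw [e2, e1]
      linarith [base t ht]
    intro x
    rcases classify a b c hb0 hc0 hbc ha0 hab hac habc x with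
      h | h | h | h | h | h | h | h <;> rw [h]
    · exact base 0 hmem0
    · have := shift 0 hmem0; rwa [add_zero] at this
    · exact base b hmemb
    · exact shift b hmemb
    · exact base c hmemc
    · exact shift c hmemc
    · exact base (b+c) hmembc
    · simpa [add_assoc] using shift (b+c) hmembc
  -- the X₂ mass
  obtain ⟨n1, n2, n3, n4⟩ := notmem a b c hb0 hc0 hbc ha0 hab hac habc
  have hM : p 0 + p b + p c + p (b+c) = 1/2 := by
    have h := hI2a
    rw [hX2set] at h
    unfold measOf at h
    rw [expand a b c hb0 hc0 hbc ha0 hab hac habc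
      (fun x => Set.indicator {0, b, c, b+c} p x)] at h
    simp only [Set.indicator_apply, Set.mem_insert_iff, Set.mem_singleton_iff] at h
    simp only [n1.1, n1.2.1, n1.2.2.1, n1.2.2.2, n2.1, n2.2.1, n2.2.2.1, n2.2.2.2,
      n3.1, n3.2.1, n3.2.2.1, n3.2.2.2, n4.1, n4.2.1, n4.2.2.1, n4.2.2.2] at h
    simp only [if_true, if_false, eq_self_iff_true, true_or, or_true, if_pos, or_false,
      false_or] at h
    norm_num at h
    linarith [h]
  have total : p 0 + p a + p b + p (a+b) + p c + p (a+c) + p (b+c) + p (a+b+c) = 1 := by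
    have h := hp.2
    rw [expand a b c hb0 hc0 hbc ha0 hab hac habc p] at h
    exact h
  -- vanishing of the characteristic function
  have hA : ∀ y : G, y ≠ 0 → pb a y = false → charFn p y = 0 := by
    intro y hy0 hay
    have hpa : pairing a y = 1 := by rw [pairing_eq, hay]; simp
    have h1 : ∑ x : G, pairing x y * p (x + a) = charFn p y := by
      refine Fintype.sum_equiv (Equiv.addRight a) _ _ (fun x => ?_)
      show pairing x y * p (x + a) = pairing (x + a) y * p (x + a)
      rw [pairing_add_left, hpa, mul_one]
    have h2 : charFn p y + charFn p y = ∑ x : G, pairing x y * (p x + p (x+a)) := by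
      nth_rewrite 2 [← h1]
      unfold charFn
      rw [← Finset.sum_add_distrib]
      exact Finset.sum_congr rfl fun x _ => by ring
    have h3 : ∑ x : G, pairing x y * (p x + p (x+a)) = 0 := by
      have : ∀ x : G, pairing x y * (p x + p (x+a)) = pairing x y * (1/4) :=
        fun x => by rw [h14 x]
      simp only [this]
      rw [← Finset.sum_mul, orth y hy0]
      ring
    linarith [h2, h3]
  have hB : ∀ y : G, pb a y = true → pb b y = false → pb c y = false → charFn p y = 0 := by
    intro y hay hby hcy
    have epa : pairing a y = -1 := by rw [pairing_eq, hay]; simp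
    have epb : pairing b y = 1 := by rw [pairing_eq, hby]; simp
    have epc : pairing c y = 1 := by rw [pairing_eq, hcy]; simp
    have epbc : pairing (b+c) y = 1 := by rw [pairing_add_left, epb, epc]; ring
    have epab : pairing (a+b) y = -1 := by rw [pairing_add_left, epa, epb]; ring
    have epac : pairing (a+c) y = -1 := by rw [pairing_add_left, epa, epc]; ring
    have epabc : pairing (a+b+c) y = -1 := by rw [pairing_add_left, epab, epc]; ring
    unfold charFn
    rw [expand a b c hb0 hc0 hbc ha0 hab hac habc (fun x => pairing x y * p x)]
    simp only [pairing_zero_left, epa, epb, epc, epbc, epab, epac, epabc]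
    linarith [total, hM]
  -- now the TEC argument
  intro q hq habs
  have hq0 : charFn q 0 = 1 := charFn_zero_eq_one q hq.2
  have hp0 : charFn p 0 = 1 := charFn_zero_eq_one p hp.2
  have habs0 : ∀ y : G, charFn p y = 0 → charFn q y = 0 := by
    intro y h
    have := habs y
    rw [h, abs_zero] at this
    exact abs_eq_zero.mp this
  -- dual basis
  obtain ⟨a', haa', hba', hca'⟩ := dual_a a b c hb0 hc0 hbc ha0 hab hac habc
  obtain ⟨b', hab', hbb', hcb'⟩ := dual_b a b c hb0 hc0 hbc ha0 hab hac habc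
  obtain ⟨c', hac', hbc', hcc'⟩ := dual_c a b c hb0 hc0 hbc ha0 hab hac habc
  have hb'0 : b' ≠ 0 := fun h => by rw [h, pb_zero_right] at hbb'; exact Bool.noConfusion hbb'
  have hc'0 : c' ≠ 0 := fun h => by rw [h, pb_zero_right] at hcc'; exact Bool.noConfusion hcc'
  have hb'c' : b' ≠ c' := fun h => by rw [h, hbc'] at hbb'; exact Bool.noConfusion hbb'
  have ha'0 : a' ≠ 0 := fun h => by rw [h, pb_zero_right] at haa'; exact Bool.noConfusion haa'
  have ha'b' : a' ≠ b' := fun h => by rw [h, hab'] at haa'; exact Bool.noConfusion haa'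
  have ha'c' : a' ≠ c' := fun h => by rw [h, hac'] at haa'; exact Bool.noConfusion haa'
  have ha'bc' : a' ≠ b' + c' := by
    intro h
    rw [h, pb_add_right, hab', hac'] at haa'
    exact Bool.noConfusion haa'
  -- classify the surviving frequencies
  have surv : ∀ y : G, pb a y = true → ¬(pb b y = false ∧ pb c y = false) →
      y = a' + b' ∨ y = a' + c' ∨ y = a' + b' + c' := by
    intro y hay hbcy
    rcases classify a' b' c' hb'0 hc'0 hb'c' ha'0 ha'b' ha'c' ha'bc' y with
      rfl | rfl | rfl | rfl | rfl | rfl | rfl | rfl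
    · rw [pb_zero_right] at hay; exact Bool.noConfusion hay
    · exact absurd ⟨hba', hca'⟩ hbcy
    · rw [hab'] at hay; exact Bool.noConfusion hay
    · exact Or.inl rfl
    · rw [hac'] at hay; exact Bool.noConfusion hay
    · exact Or.inr (Or.inl rfl)
    · rw [pb_add_right, hab', hac'] at hay; exact Bool.noConfusion hay
    · exact Or.inr (Or.inr rfl)
  have hsign : ∀ z : G, charFn q z = charFn p z ∨ charFn q z = - charFn p z :=
    fun z => abs_eq_abs.mp (habs z)
  -- main construction given the three signs
  have main : ∀ s1 s2 s3 : Bool,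
      charFn q (a'+b') = (if s1 then -1 else 1) * charFn p (a'+b') →
      charFn q (a'+c') = (if s2 then -1 else 1) * charFn p (a'+c') →
      charFn q (a'+b'+c') = (if s3 then -1 else 1) * charFn p (a'+b'+c') →
      ∃ x : G, ∀ e : G, q e = p (e + x) := by
    intro s1 s2 s3 hz1 hz2 hz3
    obtain ⟨x, hx1, hx2, hx3⟩ :=
      solve a b c a' b' c' haa' hba' hca' hab' hbb' hcb' hac' hbc' hcc' s1 s2 s3
    have key : ∀ y : G, charFn q y = pairing x y * charFn p y := by
      intro y
      by_cases hy0 : y = 0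
      · subst hy0
        rw [hq0, hp0, pairing_zero_right]
        ring
      · cases hay : pb a y with
        | false =>
          have hpz := hA y hy0 hay
          rw [hpz, habs0 y hpz]
          ring
        | true =>
          by_cases hbcy : pb b y = false ∧ pb c y = false
          · have hpz := hB y hay hbcy.1 hbcy.2
            rw [hpz, habs0 y hpz]
            ring
          · rcases surv y hay hbcy with rfl | rfl | rfl
            · rw [pairing_eq, hx1]; exact hz1
            · rw [pairing_eq, hx2]; exact hz2
            · rw [pairing_eq, hx3]; exact hz3
    refine ⟨x, fun e => ?_⟩
    have i1 := inversion q e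
    have i2 := inversion p (e + x)
    have i3 : ∑ y : G, pairing e y * charFn q y = ∑ y : G, pairing (e+x) y * charFn p y := by
      refine Finset.sum_congr rfl fun y _ => ?_
      rw [key y, pairing_add_left]
      ring
    linarith [i1, i2, i3]
  rcases hsign (a'+b') with h1 | h1 <;> rcases hsign (a'+c') with h2 | h2 <;>
    rcases hsign (a'+b'+c') with h3 | h3
  · exact main false false false (by simpa using h1) (by simpa using h2) (by simpa using h3)
  · exact main false false true (by simpa using h1) (by simpa using h2) (by simpa using h3)
  · exact main false true false (by simpa using h1) (by simpa using h2) (by simpa using h3)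
  · exact main false true true (by simpa using h1) (by simpa using h2) (by simpa using h3)
  · exact main true false false (by simpa using h1) (by simpa using h2) (by simpa using h3)
  · exact main true false true (by simpa using h1) (by simpa using h2) (by simpa using h3)
  · exact main true true false (by simpa using h1) (by simpa using h2) (by simpa using h3)
  · exact main true true true (by simpa using h1) (by simpa using h2) (by simpa using h3)
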